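/- Let G be a finite DAG in which s₀ is the unique state with no parents, every state is reachable from s₀, X is the nonempty terminal set, every non-terminal state has at least one child, and R : X → ℝ is a reward function. Let F be the flow-iteration solution for R. Then F(s₀) = Σ_{x ∈ X} R(x); that is, the flow at the initial state equals the partition function of the reward. -/

import Mathlib

/-- The set of children of `s` (states reachable via one edge, i.e. available actions). -/
def children {S : Type*} [Fintype S] (E : S → S → Prop) [DecidableRel E] (s : S) : Finset S :=
  Finset.univ.filter (fun s' => E s s')

/-- The set of parents of `s` (states with an edge into `s`). -/
def parents {S : Type*} [Fintype S] (E : S → S → Prop) [DecidableRel E] (s : S) : Finset S :=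
  Finset.univ.filter (fun s'' => E s'' s)

/-- In a finite DAG in which `s₀` is the unique state with no parents, every
state is reachable from `s₀`, the terminal set is nonempty, and `F` is the flow-iteration
solution for the reward `R`, the flow at the initial state equals the partition function:
`F(s₀) = Σ_{x ∈ X} R(x)`. -/
theorem stmt6 {S : Type*} [Fintype S] [DecidableEq S] (E : S → S → Prop) [DecidableRel E]
    (hacyc : ∀ s : S, ¬ Relation.TransGen E s s)
    (s₀ : S)
    (hroot : parents E s₀ = ∅)
    (hpar : ∀ s : S, s ≠ s₀ → (parents E s).Nonempty)
    (hreach : ∀ s : S, Relation.ReflTransGen E s₀ s)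
    (hX : ∃ x : S, children E x = ∅)
    (R F : S → ℝ)
    (hFterm : ∀ x, children E x = ∅ → F x = R x)
    (hFrec : ∀ s, (children E s).Nonempty →
      F s = ∑ s' ∈ children E s, F s' / ((parents E s').card : ℝ)) :
    F s₀ = ∑ x ∈ Finset.univ.filter (fun x => children E x = ∅), R x := by
  have hterm : ∑ x ∈ Finset.univ.filter (fun x => children E x = ∅), F x
      = ∑ x ∈ Finset.univ.filter (fun x => children E x = ∅), R x :=
    Finset.sum_congr rfl fun x hx => hFterm x (Finset.mem_filter.mp hx).2
  rw [← hterm]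
  have hpartition := Finset.sum_filter_add_sum_filter_not Finset.univ
    (fun s => children E s = ∅) F
  have herase : F s₀ + ∑ s ∈ Finset.univ.erase s₀, F s = ∑ s ∈ Finset.univ, F s :=
    Finset.add_sum_erase _ F (Finset.mem_univ s₀)
  have key : ∑ s ∈ Finset.univ.filter (fun s => ¬ children E s = ∅), F s
      = ∑ s ∈ Finset.univ.erase s₀, F s := by
    calc ∑ s ∈ Finset.univ.filter (fun s => ¬ children E s = ∅), F s
        = ∑ s ∈ Finset.univ.filter (fun s => ¬ children E s = ∅),
            ∑ s' ∈ children E s, F s' / ((parents E s').card : ℝ) := by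
          refine Finset.sum_congr rfl fun s hs => hFrec s ?_
          exact Finset.nonempty_iff_ne_empty.mpr (Finset.mem_filter.mp hs).2
      _ = ∑ s ∈ Finset.univ.filter (fun s => ¬ children E s = ∅),
            ∑ s' ∈ Finset.univ, if E s s' then F s' / ((parents E s').card : ℝ) else 0 := by
          refine Finset.sum_congr rfl fun s _ => ?_
          rw [children, Finset.sum_filter]
      _ = ∑ s' ∈ Finset.univ, ∑ s ∈ Finset.univ.filter (fun s => ¬ children E s = ∅),
            if E s s' then F s' / ((parents E s').card : ℝ) else 0 := Finset.sum_comm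
      _ = ∑ s' ∈ Finset.univ, ((parents E s').card : ℝ) * (F s' / ((parents E s').card : ℝ)) := by
          refine Finset.sum_congr rfl fun s' _ => ?_
          rw [← Finset.sum_filter]
          have hset : (Finset.univ.filter (fun s => ¬ children E s = ∅)).filter
              (fun s => E s s') = parents E s' := by
            ext s
            simp only [parents, children, Finset.mem_filter, Finset.mem_univ, true_and]
            constructor
            · rintro ⟨_, h⟩; exact h
            · intro h
              refine ⟨Finset.mem_filter.mpr ⟨Finset.mem_univ _, fun hemp => ?_⟩, h⟩
              have : s' ∈ Finset.univ.filter (fun t => E s t) := by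
                simp [h]
              rw [hemp] at this
              exact absurd this (Finset.notMem_empty _)
          rw [hset, Finset.sum_const, nsmul_eq_mul]
      _ = ∑ s' ∈ Finset.univ.erase s₀, F s' := by
          rw [← Finset.add_sum_erase _ _ (Finset.mem_univ s₀)]
          have h0 : ((parents E s₀).card : ℝ) * (F s₀ / ((parents E s₀).card : ℝ)) = 0 := by
            rw [hroot]; simp
          rw [h0, zero_add]
          refine Finset.sum_congr rfl fun s hs => ?_
          have hne : s ≠ s₀ := (Finset.mem_erase.mp hs).1
          have hcard : ((parents E s).card : ℝ) ≠ 0 := by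
            have := Finset.card_pos.mpr (hpar s hne)
            positivity
          field_simp
  linarith [hpartition, herase, key]
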